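/- Let X be a set with a linear order < that is well-founded (a well-order). Then: (a) every non-principal ultrafilter u over X satisfies I_u ∈ u; (b) ≤̃ coincides with ⊴, i.e. for all ultrafilters u, v, u ≤̃ v iff u ⊴ v; (c) ≤̃ is a pre-well-order: it is reflexive, transitive, total, and every nonempty set S of ultrafilters over X contains an element m such that m ≤̃ u for all u ∈ S. -/

import Mathlib

/-- The ultrafilter extension of a binary relation `R` on `X`:
`u R̃ v` iff `{x | {y | R x y} ∈ v} ∈ u`. -/
def relExt {X : Type*} (R : X → X → Prop) (u v : Ultrafilter X) : Prop :=
  {x : X | {y : X | R x y} ∈ v} ∈ u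

/-- `I_u`: the intersection of all downward closed sets belonging to `u`. -/
def Iset {X : Type*} [LinearOrder X] (u : Ultrafilter X) : Set X :=
  ⋂₀ {I : Set X | I ∈ u ∧ ∀ ⦃a b : X⦄, a ≤ b → b ∈ I → a ∈ I}

/-- `J_u`: the intersection of all upward closed sets belonging to `u`. -/
def Jset {X : Type*} [LinearOrder X] (u : Ultrafilter X) : Set X :=
  ⋂₀ {J : Set X | J ∈ u ∧ ∀ ⦃a b : X⦄, a ≤ b → a ∈ J → b ∈ J}

/-- The ultrafilter extension of a binary operation `F` on `X`. -/
def opExt {X : Type*} (F : X → X → X) (u v : Ultrafilter X) : Ultrafilter X :=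
  u.bind (fun x => v.map (F x))

/-- Cuts are upward closed. -/
theorem iio_mem_up {X : Type*} [LinearOrder X] (u : Ultrafilter X) {x z : X}
    (hx : Set.Iio x ∈ u) (hxz : x ≤ z) : Set.Iio z ∈ u :=
  Filter.mem_of_superset hx (Set.Iio_subset_Iio hxz)

/-- Key characterization of the ultrafilter extension of `≤` on a well-order. -/
theorem relExt_le_iff {X : Type*} [LinearOrder X]
    (hwf : WellFounded ((· < ·) : X → X → Prop)) (u v : Ultrafilter X) :
    relExt (· ≤ ·) u v ↔ ∀ x : X, Set.Iio x ∈ v → Set.Iio x ∈ u := by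
  constructor
  · intro h x hx
    refine Filter.mem_of_superset h ?_
    intro z hz
    simp only [Set.mem_setOf_eq] at hz
    by_contra hzx
    have hne := Ultrafilter.nonempty_of_mem (Filter.inter_mem hz hx)
    obtain ⟨y, hy1, hy2⟩ := hne
    exact hzx (lt_of_le_of_lt hy1 hy2)
  · intro h
    by_contra hcon
    have hC : {x : X | Set.Iio x ∈ v} ∈ u := by
      have hcompl : ({x : X | {y : X | x ≤ y} ∈ v})ᶜ ∈ u :=
        Ultrafilter.compl_mem_iff_notMem.mpr hcon
      refine Filter.mem_of_superset hcompl ?_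
      intro z hz
      simp only [Set.mem_compl_iff, Set.mem_setOf_eq] at hz ⊢
      have : ({y : X | z ≤ y})ᶜ ∈ v := Ultrafilter.compl_mem_iff_notMem.mpr hz
      refine Filter.mem_of_superset this ?_
      intro w hw
      simp only [Set.mem_compl_iff, Set.mem_setOf_eq] at hw
      exact lt_of_not_ge hw
    have hC' : {x : X | Set.Iio x ∈ u} ∈ u := Filter.mem_of_superset hC h
    have hne : {x : X | Set.Iio x ∈ u}.Nonempty := Ultrafilter.nonempty_of_mem hC'
    set m := hwf.min _ hne with hm
    have hmem : Set.Iio m ∈ u := hwf.min_mem _ hne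
    obtain ⟨z, hz1, hz2⟩ := Ultrafilter.nonempty_of_mem (Filter.inter_mem hC' hmem)
    exact hwf.not_lt_min _ hz1 hz2

/-- For a well-ordered set: every non-principal ultrafilter has `I_u ∈ u`,
`≤̃` coincides with `⊴`, and `≤̃` is a pre-well-order. -/
theorem stmt13 {X : Type*} [LinearOrder X]
    (hwf : WellFounded ((· < ·) : X → X → Prop)) :
    (∀ u : Ultrafilter X, (¬ ∃ x : X, u = pure x) → Iset u ∈ u) ∧
    (∀ u v : Ultrafilter X,
      relExt (· ≤ ·) u v ↔ (relExt (· ≤ ·) u v ∨ relExt (· ≥ ·) v u)) ∧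
    Reflexive (relExt ((· ≤ ·) : X → X → Prop)) ∧
    Transitive (relExt ((· ≤ ·) : X → X → Prop)) ∧
    (∀ u v : Ultrafilter X, relExt (· ≤ ·) u v ∨ relExt (· ≤ ·) v u) ∧
    (∀ S : Set (Ultrafilter X), S.Nonempty →
      ∃ m ∈ S, ∀ u ∈ S, relExt (· ≤ ·) m u) := by
  -- a downward closed set in `u` missing a point is below that point
  have hdown : ∀ (u : Ultrafilter X) (I : Set X), I ∈ u →
      (∀ ⦃a b : X⦄, a ≤ b → b ∈ I → a ∈ I) → ∀ x : X, x ∉ I → Set.Iio x ∈ u := by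
    intro u I hIu hId x hx
    refine Filter.mem_of_superset hIu ?_
    intro w hw
    by_contra hwx
    exact hx (hId (le_of_not_gt hwx) hw)
  refine ⟨?_, ?_, ?_, ?_, ?_, ?_⟩
  · -- part (a): Iset u ∈ u (holds for all u in fact)
    intro u _
    by_cases hC : ∃ x : X, Set.Iio x ∈ u
    · have hne : {x : X | Set.Iio x ∈ u}.Nonempty := hC
      set m := hwf.min _ hne with hm
      have hmem : Set.Iio m ∈ u := hwf.min_mem _ hne
      refine Filter.mem_of_superset hmem ?_
      intro z hz
      rw [Iset, Set.mem_sInter]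
      rintro I ⟨hIu, hId⟩
      by_contra hzI
      exact hwf.not_lt_min _ (hdown u I hIu hId z hzI) hz
    · push_neg at hC
      refine Filter.mem_of_superset Filter.univ_mem ?_
      intro x _
      rw [Iset, Set.mem_sInter]
      rintro I ⟨hIu, hId⟩
      by_contra hxI
      exact hC x (hdown u I hIu hId x hxI)
  · -- part (b)
    intro u v
    constructor
    · exact Or.inl
    · rintro (h | h)
      · exact h
      · rw [relExt_le_iff hwf]
        intro z hz
        obtain ⟨x, hx1, hx2⟩ := Ultrafilter.nonempty_of_mem (Filter.inter_mem h hz)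
        simp only [Set.mem_setOf_eq] at hx1
        refine Filter.mem_of_superset hx1 ?_
        intro w hw
        exact lt_of_le_of_lt hw hx2
  · intro u
    rw [relExt_le_iff hwf]
    exact fun x hx => hx
  · intro u v w huv hvw
    rw [relExt_le_iff hwf] at *
    exact fun x hx => huv x (hvw x hx)
  · intro u v
    by_cases h : relExt (· ≤ ·) u v
    · exact Or.inl h
    · right
      rw [relExt_le_iff hwf] at h ⊢
      push_neg at h
      obtain ⟨x, hxv, hxu⟩ := h
      intro z hz
      rcases le_or_gt x z with hle | hlt
      · exact iio_mem_up v hxv hle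
      · exact absurd (iio_mem_up u hz hlt.le) hxu
  · intro S hS
    by_cases hT : (⋃ u ∈ S, {x : X | Set.Iio x ∈ u}).Nonempty
    · set T := ⋃ u ∈ S, {x : X | Set.Iio x ∈ u} with hTdef
      set m₀ := hwf.min T hT with hm₀
      have hmem : m₀ ∈ T := hwf.min_mem T hT
      simp only [hTdef, Set.mem_iUnion, Set.mem_setOf_eq] at hmem
      obtain ⟨u, huS, hu⟩ := hmem
      refine ⟨u, huS, ?_⟩
      intro v hvS
      rw [relExt_le_iff hwf]
      intro z hz
      have hzT : z ∈ T := by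
        simp only [hTdef, Set.mem_iUnion, Set.mem_setOf_eq]
        exact ⟨v, hvS, hz⟩
      have : m₀ ≤ z := le_of_not_gt (hwf.not_lt_min T hzT)
      exact iio_mem_up u hu this
    · obtain ⟨u, huS⟩ := hS
      refine ⟨u, huS, ?_⟩
      intro v hvS
      rw [relExt_le_iff hwf]
      intro z hz
      exact absurd (Set.mem_biUnion hvS hz) (fun h => hT ⟨z, h⟩)
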